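/- Let R be a PID and Λ a free R-module of rank 2m with non-degenerate alternating form of square-free level N. If X is a maximal totally isotropic submodule of Λ (rank m), then there exist a basis e_1,…,e_m of X and vectors f_1,…,f_m ∈ Λ spanning a totally isotropic submodule with ⟨e_i,f_j⟩ = d_i δ_{ij}, d_i | N, such that Λ = ⊕_{i=1}^m R e_i ⊕ ⊕_{i=1}^m R f_i. -/

import Mathlib

open Module Submodule

set_option maxHeartbeats 1000000

/-- A maximal totally isotropic submodule `X` (of rank `m`) of a lattice
of square-free level `N` extends to a para-symplectic basis of the whole lattice:
there are a basis `e` of `X` and vectors `f` spanning a totally isotropic submodule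
with `⟨e i, f j⟩ = d i δ_{ij}`, `d i ∣ N`, such that the `e`'s and `f`'s together
form a basis of `Λ`. -/
theorem stmt_2 (R : Type*) [CommRing R] [IsDomain R] [IsPrincipalIdealRing R]
    (Λ : Type*) [AddCommGroup Λ] [Module R Λ] [Module.Free R Λ] [Module.Finite R Λ]
    (m : ℕ) (hrank : Module.finrank R Λ = 2 * m)
    (B : LinearMap.BilinForm R Λ)
    (halt : ∀ x, B x x = 0)
    (hnd : ∀ x, (∀ y, B x y = 0) → x = 0)
    (N : R) (hN0 : N ≠ 0) (hNsf : Squarefree N)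
    (hlevel : ∀ φ : Λ →ₗ[R] R, ∃ v : Λ, ∀ x, N * φ x = B v x)
    (X : Submodule R Λ)
    (hXiso : ∀ x ∈ X, ∀ y ∈ X, B x y = 0)
    (hXmax : ∀ Y : Submodule R Λ, (∀ x ∈ Y, ∀ y ∈ Y, B x y = 0) → X ≤ Y → Y = X) :
    ∃ (b : Basis (Fin m ⊕ Fin m) R Λ) (d : Fin m → R),
      (∀ i, b (Sum.inl i) ∈ X) ∧
      Submodule.span R (Set.range fun i => b (Sum.inl i)) = X ∧
      (∀ i, d i ∣ N) ∧
      (∀ i j, B (b (Sum.inr i)) (b (Sum.inr j)) = 0) ∧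
      (∀ i j, B (b (Sum.inl i)) (b (Sum.inr j)) = if i = j then d i else 0) := by
  classical
  -- skew symmetry
  have hskew : ∀ x y : Λ, B y x = - B x y := by
    intro x y
    have h := halt (x + y)
    have hx := halt x
    have hy := halt y
    simp only [map_add, LinearMap.add_apply] at h
    linear_combination h - hx - hy
  -- the pairing map into the dual of X
  set ψ : Λ →ₗ[R] Module.Dual R X := X.subtype.dualMap ∘ₗ B.flip with hψdef
  have hψ : ∀ (y : Λ) (x : X), ψ y x = B x y := fun y x => rfl
  have hkerψ : LinearMap.ker ψ = X := by
    apply le_antisymm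
    · intro y hy
      rw [LinearMap.mem_ker] at hy
      have hy' : ∀ x ∈ X, B x y = 0 := by
        intro x hx
        have := DFunLike.congr_fun hy ⟨x, hx⟩
        simpa [hψ] using this
      have hYiso : ∀ u ∈ X ⊔ span R {y}, ∀ w ∈ X ⊔ span R {y}, B u w = 0 := by
        intro u hu w hw
        rw [Submodule.mem_sup] at hu hw
        obtain ⟨x1, hx1, z1, hz1, rfl⟩ := hu
        obtain ⟨x2, hx2, z2, hz2, rfl⟩ := hw
        obtain ⟨r1, rfl⟩ := Submodule.mem_span_singleton.mp hz1
        obtain ⟨r2, rfl⟩ := Submodule.mem_span_singleton.mp hz2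
        have h1 : B x1 x2 = 0 := hXiso _ hx1 _ hx2
        have h2 : B x1 y = 0 := hy' _ hx1
        have h3 : B x2 y = 0 := hy' _ hx2
        have h4 : B y x2 = 0 := by rw [hskew]; simp [h3]
        have h5 : B y y = 0 := halt y
        simp [map_add, map_smul, h1, h2, h4, h5, LinearMap.add_apply, LinearMap.smul_apply]
      have hYX := hXmax _ hYiso le_sup_left
      have : y ∈ X ⊔ span R {y} :=
        Submodule.mem_sup_right (Submodule.mem_span_singleton_self y)
      rwa [hYX] at this
    · intro x hx
      rw [LinearMap.mem_ker]
      ext y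
      simpa [hψ] using hXiso _ y.2 x hx
  -- basis of X
  obtain ⟨r, e0⟩ := X.basisOfPid (Module.Free.chooseBasis R Λ)
  haveI : Module.Free R X := Module.Free.of_basis e0
  haveI : Module.Finite R X := Module.Finite.of_basis e0
  haveI : IsReflexive R X := inferInstance
  -- Smith normal form for the image of ψ inside the dual of X
  obtain ⟨n, snf⟩ := Submodule.smithNormalForm e0.dualBasis (LinearMap.range ψ)
  -- the quotient Λ/X is free, hence X admits a retraction
  haveI : Module.Free R (LinearMap.range ψ) := Module.Free.of_basis snf.bN
  have eq1 : (Λ ⧸ X) ≃ₗ[R] LinearMap.range ψ :=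
    (Submodule.quotEquivOfEq X (LinearMap.ker ψ) hkerψ.symm).trans ψ.quotKerEquivRange
  haveI : Module.Free R (Λ ⧸ X) := Module.Free.of_equiv eq1.symm
  obtain ⟨s, hs⟩ := Module.projective_lifting_property X.mkQ
    (LinearMap.id : (Λ ⧸ X) →ₗ[R] (Λ ⧸ X)) (Submodule.mkQ_surjective X)
  have hπ0mem : ∀ v : Λ, v - s (X.mkQ v) ∈ X := by
    intro v
    rw [← Submodule.Quotient.mk_eq_zero X]
    have : X.mkQ (s (X.mkQ v)) = X.mkQ v := DFunLike.congr_fun hs (X.mkQ v)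
    have h2 : X.mkQ (v - s (X.mkQ v)) = 0 := by
      rw [map_sub, this, sub_self]
    simpa using h2
  set π : Λ →ₗ[R] X :=
    (LinearMap.id - s ∘ₗ X.mkQ).codRestrict X hπ0mem with hπdef
  have hπid : ∀ x : X, π (x : Λ) = x := by
    intro x
    apply Subtype.ext
    have : X.mkQ (x : Λ) = 0 := (Submodule.Quotient.mk_eq_zero X).mpr x.2
    have hc : (π (x : Λ) : Λ) = (x : Λ) - s (X.mkQ (x : Λ)) := rfl
    rw [hc, this, map_zero, sub_zero]
  have hNrange : ∀ φ : Module.Dual R X, N • φ ∈ LinearMap.range ψ := by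
    intro φ
    obtain ⟨v, hv⟩ := hlevel (φ ∘ₗ π)
    refine ⟨-v, ?_⟩
    ext x
    have h1 : ψ (-v) x = - B (x : Λ) v := by simp [hψ]
    rw [h1, ← hskew, ← hv]
    simp [hπid]
  -- the Smith embedding is surjective
  have hfsurj : Function.Surjective snf.f := by
    intro k
    by_contra hk
    have hk' : k ∉ Set.range snf.f := by simpa using hk
    have h1 := snf.repr_eq_zero_of_notMem_range ⟨N • snf.bM k, hNrange (snf.bM k)⟩ hk'
    simp only [map_smul, Basis.repr_self, Finsupp.smul_apply, Finsupp.single_apply] at h1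
    exact hN0 (by simpa using h1)
  set σ : Fin n ≃ Fin r := Equiv.ofBijective snf.f ⟨snf.f.injective, hfsurj⟩ with hσdef
  have hfσ : ∀ i, snf.f (σ.symm i) = i := fun i => by
    have := σ.apply_symm_apply i
    rw [hσdef] at this
    exact this
  set d : Fin r → R := fun i => snf.a (σ.symm i) with hddef
  have hd0 : ∀ i, d i ≠ 0 := by
    intro i hdi
    refine snf.bN.ne_zero (σ.symm i) (Subtype.ext ?_)
    rw [snf.snf (σ.symm i)]
    have : snf.a (σ.symm i) = 0 := hdi
    rw [this, zero_smul]
    rfl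
  have hdvdN : ∀ i, d i ∣ N := by
    intro i
    have h := snf.repr_apply_embedding_eq_repr_smul
      (m := ⟨N • snf.bM i, hNrange (snf.bM i)⟩) (i := σ.symm i)
    rw [hfσ] at h
    simp only [map_smul, Basis.repr_self, Finsupp.smul_apply, Finsupp.single_apply,
      if_pos rfl] at h
    exact ⟨snf.bN.repr ⟨N • snf.bM i, hNrange (snf.bM i)⟩ (σ.symm i), by
      simpa [hddef, smul_eq_mul] using h⟩
  -- lifts g i with ψ (g i) = d i • bM i
  have hgex : ∀ i, ∃ v : Λ, ψ v = d i • snf.bM i := by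
    intro i
    obtain ⟨v, hv⟩ := (snf.bN (σ.symm i)).2
    refine ⟨v, ?_⟩
    rw [hv]
    have := snf.snf (σ.symm i)
    rw [this, hfσ]
  choose g hg using hgex
  -- the basis of X dual to snf.bM
  set eB : Basis (Fin r) R X := snf.bM.dualBasis.map (Module.evalEquiv R X).symm with heBdef
  have heval : ∀ k l, snf.bM k (eB l) = if k = l then 1 else 0 := by
    intro k l
    rw [heBdef, Basis.map_apply, Module.apply_evalEquiv_symm_apply,
      Basis.dualBasis_apply_self]
  set e' : Fin r → Λ := fun i => ((eB i : X) : Λ) with he'def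
  have he'X : ∀ i, e' i ∈ X := fun i => (eB i).2
  have hψe' : ∀ i, ψ (e' i) = 0 := by
    intro i
    have : e' i ∈ LinearMap.ker ψ := hkerψ.symm ▸ he'X i
    exact LinearMap.mem_ker.mp this
  have hXspan : Submodule.span R (Set.range e') = X := by
    have h1 : Set.range e' = X.subtype '' Set.range ⇑eB := by
      ext z; simp [he'def]
    rw [h1, ← Submodule.map_span, eB.span_eq, Submodule.map_top, Submodule.range_subtype]
  have hgram : ∀ k l, B (e' k) (g l) = if k = l then d l else 0 := by
    intro k l
    have h1 : B (e' k) (g l) = ψ (g l) (eB k) := rfl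
    rw [h1, hg l]
    simp only [LinearMap.smul_apply, heval, smul_eq_mul]
    by_cases hkl : k = l
    · simp [hkl]
    · simp [hkl, Ne.symm hkl]
  -- any lift family gives a basis of Λ together with e'
  have hbasis : ∀ g' : Fin r → Λ, (∀ i, ψ (g' i) = d i • snf.bM i) →
      LinearIndependent R (Sum.elim e' g') ∧
      Submodule.span R (Set.range (Sum.elim e' g')) = ⊤ := by
    intro g' hg'
    constructor
    · rw [Fintype.linearIndependent_iff]
      intro c hc
      have hc2 := congrArg ψ hc
      rw [map_sum, map_zero] at hc2
      simp only [map_smul] at hc2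
      rw [Fintype.sum_sum_type] at hc2
      simp only [Sum.elim_inl, Sum.elim_inr, hψe', hg', smul_zero] at hc2
      rw [Finset.sum_const_zero, zero_add] at hc2
      have hc3 : ∑ i : Fin r, (c (Sum.inr i) * d i) • snf.bM i = 0 := by
        rw [← hc2]
        refine Finset.sum_congr rfl fun i _ => ?_
        rw [smul_smul]
      have hinr : ∀ i, c (Sum.inr i) = 0 := by
        intro i
        have := Fintype.linearIndependent_iff.mp snf.bM.linearIndependent _ hc3 i
        rcases mul_eq_zero.mp this with h | h
        · exact h
        · exact absurd h (hd0 i)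
      have hc4 : ∑ i : Fin r, c (Sum.inl i) • e' i = 0 := by
        rw [Fintype.sum_sum_type] at hc
        simp only [Sum.elim_inl, Sum.elim_inr] at hc
        have : ∑ i : Fin r, c (Sum.inr i) • g' i = 0 := by
          refine Finset.sum_eq_zero fun i _ => ?_
          rw [hinr i, zero_smul]
        rw [this, add_zero] at hc
        exact hc
      have hc5 : ∑ i : Fin r, c (Sum.inl i) • eB i = 0 := by
        apply Subtype.ext
        push_cast [he'def] at hc4 ⊢
        convert hc4 using 2
      have hinl := Fintype.linearIndependent_iff.mp eB.linearIndependent _ hc5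
      intro k
      rcases k with k | k
      · exact hinl k
      · exact hinr k
    · rw [eq_top_iff]
      intro v _
      have hmem : ψ v ∈ LinearMap.range ψ := LinearMap.mem_range_self ψ v
      set q : Fin r → R := fun i => snf.bN.repr ⟨ψ v, hmem⟩ (σ.symm i) with hqdef
      have hrepr : ∀ i, snf.bM.repr (ψ v) i = d i * q i := by
        intro i
        have h := snf.repr_apply_embedding_eq_repr_smul (m := ⟨ψ v, hmem⟩) (i := σ.symm i)
        rw [hfσ, map_smul, Finsupp.smul_apply, smul_eq_mul] at h
        exact h
      have hzero : ψ (v - ∑ i, q i • g' i) = 0 := by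
        rw [map_sub, map_sum]
        simp only [map_smul, hg']
        have hv : ψ v = ∑ i, (d i * q i) • snf.bM i := by
          conv_lhs => rw [← snf.bM.sum_repr (ψ v)]
          exact Finset.sum_congr rfl fun i _ => by rw [hrepr i]
        rw [hv, sub_eq_zero]
        refine Finset.sum_congr rfl fun i _ => ?_
        rw [smul_smul, mul_comm]
      have hmemX : v - ∑ i, q i • g' i ∈ X := by
        rw [← hkerψ]; exact LinearMap.mem_ker.mpr hzero
      have h1 : v - ∑ i, q i • g' i ∈ Submodule.span R (Set.range (Sum.elim e' g')) := by
        have hsub : Set.range e' ⊆ Set.range (Sum.elim e' g') := by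
          rintro z ⟨i, rfl⟩; exact ⟨Sum.inl i, rfl⟩
        have : Submodule.span R (Set.range e') ≤ Submodule.span R (Set.range (Sum.elim e' g')) := Submodule.span_mono hsub
        rw [hXspan] at this
        exact this hmemX
      have h2 : ∑ i, q i • g' i ∈ Submodule.span R (Set.range (Sum.elim e' g')) :=
        Submodule.sum_mem _ fun i _ => Submodule.smul_mem _ _
          (Submodule.subset_span ⟨Sum.inr i, rfl⟩)
      simpa using Submodule.add_mem _ h1 h2
  obtain ⟨hli1, hsp1⟩ := hbasis g hg
  set bL : Basis (Fin r ⊕ Fin r) R Λ := Basis.mk hli1 hsp1.ge with hbLdef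
  have hbLapp : ∀ k, bL k = Sum.elim e' g k := by
    intro k; rw [hbLdef, Basis.mk_apply]
  have hrm : r = m := by
    have hcard := Module.finrank_eq_card_basis bL
    rw [hrank] at hcard
    simp only [Fintype.card_sum, Fintype.card_fin] at hcard
    omega
  have hBge : ∀ k l, B (g k) (e' l) = - (if l = k then d k else 0) := by
    intro k l; rw [hskew, hgram]
  -- solvability of the correction equations
  have hsolv : ∀ i j, ∃ p : R × R, p.1 * d i + p.2 * d j = B (g i) (g j) := by
    intro i j
    rcases eq_or_ne i j with rfl | hij
    · exact ⟨(0, 0), by simp [halt]⟩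
    have hbLinl : ∀ l, bL (Sum.inl l) = e' l := fun l => hbLapp (Sum.inl l)
    have hbLinr : ∀ l, bL (Sum.inr l) = g l := fun l => hbLapp (Sum.inr l)
    obtain ⟨v, hv⟩ := hlevel (bL.coord (Sum.inl i))
    set w := bL.repr v with hwdef
    have hBv : ∀ z : Λ, B v z =
        (∑ k : Fin r, w (Sum.inl k) * B (e' k) z) +
          ∑ k : Fin r, w (Sum.inr k) * B (g k) z := by
      intro z
      conv_lhs => rw [← bL.sum_repr v]
      simp only [map_sum, map_smul, LinearMap.sum_apply, LinearMap.smul_apply, smul_eq_mul]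
      rw [Fintype.sum_sum_type]
      simp only [hbLinl, hbLinr]
      rw [hwdef]
    have hval : ∀ l : Fin r, B v (e' l) = - (w (Sum.inr l) * d l) := by
      intro l
      rw [hBv]
      have hz1 : ∀ k ∈ Finset.univ, w (Sum.inl k) * B (e' k) (e' l) = 0 := fun k _ => by
        rw [hXiso _ (he'X k) _ (he'X l), mul_zero]
      rw [Finset.sum_congr rfl hz1, Finset.sum_const_zero, zero_add]
      have hz2 : ∀ k ∈ Finset.univ, w (Sum.inr k) * B (g k) (e' l) =
          if k = l then -(w (Sum.inr l) * d l) else 0 := by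
        intro k _
        rw [hBge k l]
        rcases eq_or_ne k l with rfl | hkl
        · simp
        · simp [hkl, Ne.symm hkl]
      rw [Finset.sum_congr rfl hz2, Finset.sum_ite_eq' Finset.univ]
      simp
    have hvalg : ∀ l : Fin r, B v (g l) =
        w (Sum.inl l) * d l + ∑ k : Fin r, w (Sum.inr k) * B (g k) (g l) := by
      intro l
      rw [hBv]
      congr 1
      have hz1 : ∀ k ∈ Finset.univ, w (Sum.inl k) * B (e' k) (g l) =
          if k = l then w (Sum.inl l) * d l else 0 := by
        intro k _
        rw [hgram k l]
        rcases eq_or_ne k l with rfl | hkl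
        · simp
        · simp [hkl]
      rw [Finset.sum_congr rfl hz1, Finset.sum_ite_eq' Finset.univ]
      simp
    have hce : ∀ l, bL.coord (Sum.inl i) (e' l) = if l = i then 1 else 0 := by
      intro l
      rw [← hbLinl l, Basis.coord_apply, Basis.repr_self_apply]
      simp
    have hcg : ∀ l, bL.coord (Sum.inl i) (g l) = 0 := by
      intro l
      rw [← hbLinr l, Basis.coord_apply, Basis.repr_self_apply]
      simp
    have heqA : ∀ l, N * (if l = i then 1 else 0) = -(w (Sum.inr l) * d l) := by
      intro l
      have h := hv (e' l)
      rwa [hval l, hce l] at h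
    have hw0 : ∀ l, l ≠ i → w (Sum.inr l) = 0 := by
      intro l hl
      have h := heqA l
      rw [if_neg hl, mul_zero] at h
      have h2 : w (Sum.inr l) * d l = 0 := by linear_combination h
      rcases mul_eq_zero.mp h2 with h3 | h3
      · exact h3
      · exact absurd h3 (hd0 l)
    obtain ⟨sN, hsN⟩ := hdvdN i
    have hwi : w (Sum.inr i) * d i = - N := by
      have h := heqA i
      rw [if_pos rfl, mul_one] at h
      linear_combination h
    have heqB : w (Sum.inl j) * d j + w (Sum.inr i) * B (g i) (g j) = 0 := by
      have h := hv (g j)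
      rw [hvalg j, hcg j, mul_zero] at h
      have hsum : ∑ k : Fin r, w (Sum.inr k) * B (g k) (g j) =
          w (Sum.inr i) * B (g i) (g j) := by
        refine Finset.sum_eq_single i (fun k _ hk => by rw [hw0 k hk, zero_mul])
          (fun h => absurd (Finset.mem_univ i) h)
      rw [hsum] at h
      linear_combination -h
    have hwi2 : - w (Sum.inr i) = sN := by
      have hc : d i * (- w (Sum.inr i)) = d i * sN := by
        linear_combination (-1 : R) * hwi + hsN
      exact mul_left_cancel₀ (hd0 i) hc
    have hdvd2 : d j ∣ sN * B (g i) (g j) := by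
      refine ⟨w (Sum.inl j), ?_⟩
      linear_combination (-1 : R) * heqB + (- B (g i) (g j)) * hwi2
    -- ideal-theoretic step
    haveI hIp : (Ideal.span {d i, d j}).IsPrincipal :=
      IsPrincipalIdealRing.principal _
    obtain ⟨t, ht⟩ := hIp
    rw [Ideal.submodule_span_eq] at ht
    have hti : t ∣ d i := by
      rw [← Ideal.mem_span_singleton, ← ht]
      exact Ideal.subset_span (by simp)
    have htj : t ∣ d j := by
      rw [← Ideal.mem_span_singleton, ← ht]
      exact Ideal.subset_span (by simp)
    haveI hJp : (Ideal.span {t, sN}).IsPrincipal :=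
      IsPrincipalIdealRing.principal _
    obtain ⟨u, hu⟩ := hJp
    rw [Ideal.submodule_span_eq] at hu
    have hut : u ∣ t := by
      rw [← Ideal.mem_span_singleton, ← hu]
      exact Ideal.subset_span (by simp)
    have hus : u ∣ sN := by
      rw [← Ideal.mem_span_singleton, ← hu]
      exact Ideal.subset_span (by simp)
    have huu : IsUnit u := by
      refine hNsf u ?_
      obtain ⟨x, hx⟩ := hut.trans hti
      obtain ⟨y, hy⟩ := hus
      exact ⟨x * y, by rw [hsN, hx, hy]; ring⟩
    have hcop : IsCoprime t sN := by
      have h1 : (1 : R) ∈ Ideal.span {t, sN} := by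
        rw [hu, Ideal.span_singleton_eq_top.mpr huu]
        exact Submodule.mem_top
      obtain ⟨α, β, hαβ⟩ := Ideal.mem_span_pair.mp h1
      exact ⟨α, β, hαβ⟩
    have htc : t ∣ B (g i) (g j) :=
      hcop.dvd_of_dvd_mul_left (htj.trans hdvd2)
    have hcI : B (g i) (g j) ∈ Ideal.span {d i, d j} := by
      rw [ht]
      exact Ideal.mem_span_singleton.mpr htc
    obtain ⟨α, β, hαβ⟩ := Ideal.mem_span_pair.mp hcI
    exact ⟨(α, β), hαβ⟩
  choose A hA using hsolv
  set coA : Fin r → Fin r → R := fun i k =>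
    if i < k then -(A i k).2 else if k < i then (A k i).1 else 0 with hcoAdef
  set fv : Fin r → Λ := fun i => g i + ∑ k, coA i k • e' k with hfvdef
  have hee : ∀ a b, B (e' a) (e' b) = 0 := fun a b => hXiso _ (he'X a) _ (he'X b)
  have hψfv : ∀ i, ψ (fv i) = d i • snf.bM i := by
    intro i
    rw [hfvdef]
    simp only [map_add, map_sum, map_smul, hψe', smul_zero, Finset.sum_const_zero,
      add_zero, hg]
  have hBefv : ∀ k l, B (e' k) (fv l) = if k = l then d l else 0 := by
    intro k l
    rw [hfvdef]
    simp only [map_add, map_sum, map_smul, smul_eq_mul, hee, mul_zero,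
      Finset.sum_const_zero, add_zero, hgram]
  have hBfvfv : ∀ i j, B (fv i) (fv j) = 0 := by
    intro i j
    rcases eq_or_ne i j with rfl | hij
    · exact halt _
    have hB1 : B (g i) (∑ l, coA j l • e' l) = - (coA j i * d i) := by
      rw [map_sum]
      have hterm : ∀ l ∈ Finset.univ, B (g i) (coA j l • e' l) =
          if l = i then -(coA j i * d i) else 0 := by
        intro l _
        rw [map_smul, smul_eq_mul, hBge i l]
        rcases eq_or_ne l i with rfl | hli
        · simp
        · simp [hli]
      rw [Finset.sum_congr rfl hterm, Finset.sum_ite_eq' Finset.univ]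
      simp
    have hB2 : B (∑ k, coA i k • e' k) (g j) = coA i j * d j := by
      simp only [map_sum, LinearMap.sum_apply, map_smul, LinearMap.smul_apply, smul_eq_mul]
      have hterm : ∀ k ∈ Finset.univ, coA i k * B (e' k) (g j) =
          if k = j then coA i j * d j else 0 := by
        intro k _
        rw [hgram k j]
        rcases eq_or_ne k j with rfl | hkj
        · simp
        · simp [hkj]
      rw [Finset.sum_congr rfl hterm, Finset.sum_ite_eq' Finset.univ]
      simp
    have hB3 : B (∑ k, coA i k • e' k) (∑ l, coA j l • e' l) = 0 := by
      simp only [map_sum, LinearMap.sum_apply, map_smul, LinearMap.smul_apply, smul_eq_mul,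
        hee, mul_zero, Finset.sum_const_zero]
    have hexp : B (fv i) (fv j) = B (g i) (g j) + coA i j * d j - coA j i * d i := by
      rw [hfvdef]
      simp only [map_add, LinearMap.add_apply]
      rw [hB1, hB2, hB3]
      ring
    rcases lt_trichotomy i j with h | h | h
    · have e1 : coA i j = -(A i j).2 := by simp [hcoAdef, h]
      have e2 : coA j i = (A i j).1 := by simp [hcoAdef, h, lt_asymm h]
      rw [hexp, e1, e2]
      linear_combination (-1 : R) * hA i j
    · exact absurd h hij
    · have e1 : coA i j = (A j i).1 := by simp [hcoAdef, h, lt_asymm h]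
      have e2 : coA j i = -(A j i).2 := by simp [hcoAdef, h]
      have hskw := hskew (g j) (g i)
      rw [hexp, e1, e2]
      linear_combination hA j i + hskw
  obtain ⟨hli2, hsp2⟩ := hbasis fv hψfv
  subst hrm
  refine ⟨Basis.mk hli2 hsp2.ge, d, ?_, ?_, hdvdN, ?_, ?_⟩
  · intro i
    rw [Basis.mk_apply]
    exact he'X i
  · have hfun : (fun i => (Basis.mk hli2 hsp2.ge) (Sum.inl i)) = e' := by
      funext i; rw [Basis.mk_apply]; rfl
    rw [hfun, hXspan]
  · intro i j
    rw [Basis.mk_apply, Basis.mk_apply]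
    exact hBfvfv i j
  · intro i j
    rw [Basis.mk_apply, Basis.mk_apply]
    have := hBefv i j
    rw [show (Sum.elim e' fv (Sum.inl i)) = e' i from rfl,
      show (Sum.elim e' fv (Sum.inr j)) = fv j from rfl, this]
    rcases eq_or_ne i j with rfl | hij
    · simp
    · simp [hij]
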